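/- For S = {2, 3}, the greedy first move from heap 7 is strictly suboptimal in PSPE play under every tie-breaking setting X: o¹_X(7) ≥ 4 > 3 = 3 + o²_{d(X)}(4); that is, the sacrificing move 2 strictly outperforms the greedy move 3. -/
import Mathlib


inductive TB : Type
  | FvF | FvA | AvF | AvA
deriving DecidableEq

def TB.dual : TB → TB
  | .FvF => .FvF
  | .FvA => .AvF
  | .AvF => .FvA
  | .AvA => .AvA

/-- `true` iff the current mover is friendly (first letter F). -/
def TB.friendly : TB → Bool
  | .FvF => true
  | .FvA => true
  | .AvF => false
  | .AvA => false

/-- PSPE outcome pair `(o¹_X h, o²_X h)` for subtraction set `S`. -/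
def outc (S : Finset ℕ) (h : ℕ) (X : TB) : ℕ × ℕ :=
  let M := S.filter fun s => 0 < s ∧ s ≤ h
  if hM : M.Nonempty then
    have hA : M.attach.Nonempty := (Finset.attach_nonempty_iff).mpr hM
    let f : {s // s ∈ M} → ℕ := fun s =>
      have hs : h - s.1 < h := by
        have h1 := (Finset.mem_filter.mp s.2).2
        omega
      s.1 + (outc S (h - s.1) X.dual).2
    let o1 := M.attach.sup f
    let Mstar := M.attach.filter fun s => f s = o1
    have hMs : Mstar.Nonempty := by
      obtain ⟨b, hb, hbe⟩ := Finset.exists_mem_eq_sup M.attach hA f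
      exact ⟨b, Finset.mem_filter.mpr ⟨hb, hbe.symm⟩⟩
    let g : {s // s ∈ M} → ℕ := fun s =>
      have hs : h - s.1 < h := by
        have h1 := (Finset.mem_filter.mp s.2).2
        omega
      (outc S (h - s.1) X.dual).1
    if X.friendly then (o1, Mstar.sup g) else (o1, Mstar.inf' hMs g)
  else (0, 0)
termination_by h

/-- First player's PSPE utility. -/
lemma L0 (X : TB) : outc {2,3} 0 X = (0,0) := by rw [outc]; rfl
lemma L1 (X : TB) : outc {2,3} 1 X = (0,0) := by rw [outc]; rfl
lemma aux2 (s : {x // x ∈ Finset.filter (fun s => 0 < s ∧ s ≤ 2) ({2,3}:Finset ℕ)}) (X : TB) :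
    outc {2,3} (2 - ↑s) X = (0,0) := by
  obtain ⟨s, hs⟩ := s
  simp only [Finset.mem_filter, Finset.mem_insert, Finset.mem_singleton] at hs
  have : s = 2 := by omega
  subst this; exact L0 X
lemma L2 (X : TB) : outc {2,3} 2 X = (2,0) := by
  rw [outc, dif_pos (by decide)]
  simp only [aux2,
    show (Finset.filter (fun s => 0 < s ∧ s ≤ 2) {2,3}).attach = {⟨2, by decide⟩} from by decide]
  simp [Finset.filter_singleton]
lemma aux3 (s : {x // x ∈ Finset.filter (fun s => 0 < s ∧ s ≤ 3) ({2,3}:Finset ℕ)}) (X : TB) :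
    outc {2,3} (3 - ↑s) X = (0,0) := by
  obtain ⟨s, hs⟩ := s
  simp only [Finset.mem_filter, Finset.mem_insert, Finset.mem_singleton] at hs
  rcases (by omega : s = 2 ∨ s = 3) with h | h <;> subst h
  · exact L1 X
  · exact L0 X
lemma L3 (X : TB) : outc {2,3} 3 X = (3,0) := by
  rw [outc, dif_pos (by decide)]
  simp only [aux3,
    show (Finset.filter (fun s => 0 < s ∧ s ≤ 3) {2,3}).attach
      = {⟨2, by decide⟩, ⟨3, by decide⟩} from by decide]
  cases X <;> simp [Finset.filter_insert, Finset.filter_singleton]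
lemma aux4 (s : {x // x ∈ Finset.filter (fun s => 0 < s ∧ s ≤ 4) ({2,3}:Finset ℕ)}) (X : TB) :
    outc {2,3} (4 - ↑s) X = if (s:ℕ) = 2 then (2,0) else (0,0) := by
  obtain ⟨s, hs⟩ := s
  simp only [Finset.mem_filter, Finset.mem_insert, Finset.mem_singleton] at hs
  rcases (by omega : s = 2 ∨ s = 3) with h | h <;> subst h <;> simp [L1, L2]
lemma L4 (X : TB) : outc {2,3} 4 X = (3,0) := by
  rw [outc, dif_pos (by decide)]
  simp only [aux4,
    show (Finset.filter (fun s => 0 < s ∧ s ≤ 4) {2,3}).attach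
      = {⟨2, by decide⟩, ⟨3, by decide⟩} from by decide]
  cases X <;> simp [Finset.filter_insert, Finset.filter_singleton]
lemma aux5 (s : {x // x ∈ Finset.filter (fun s => 0 < s ∧ s ≤ 5) ({2,3}:Finset ℕ)}) (X : TB) :
    outc {2,3} (5 - ↑s) X = if (s:ℕ) = 2 then (3,0) else (2,0) := by
  obtain ⟨s, hs⟩ := s
  simp only [Finset.mem_filter, Finset.mem_insert, Finset.mem_singleton] at hs
  rcases (by omega : s = 2 ∨ s = 3) with h | h <;> subst h <;> simp [L2, L3]
lemma L5 (X : TB) : outc {2,3} 5 X = (3,2) := by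
  rw [outc, dif_pos (by decide)]
  simp only [aux5,
    show (Finset.filter (fun s => 0 < s ∧ s ≤ 5) {2,3}).attach
      = {⟨2, by decide⟩, ⟨3, by decide⟩} from by decide]
  cases X <;> simp [Finset.filter_insert, Finset.filter_singleton]
lemma aux7 (s : {x // x ∈ Finset.filter (fun s => 0 < s ∧ s ≤ 7) ({2,3}:Finset ℕ)}) (X : TB) :
    outc {2,3} (7 - ↑s) X = if (s:ℕ) = 2 then (3,2) else (3,0) := by
  obtain ⟨s, hs⟩ := s
  simp only [Finset.mem_filter, Finset.mem_insert, Finset.mem_singleton] at hs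
  rcases (by omega : s = 2 ∨ s = 3) with h | h <;> subst h <;> simp [L4, L5]
lemma L7 (X : TB) : outc {2,3} 7 X = (4,3) := by
  rw [outc, dif_pos (by decide)]
  simp only [aux7,
    show (Finset.filter (fun s => 0 < s ∧ s ≤ 7) {2,3}).attach
      = {⟨2, by decide⟩, ⟨3, by decide⟩} from by decide]
  cases X <;> simp [Finset.filter_insert, Finset.filter_singleton]
def o1 (S : Finset ℕ) (X : TB) (h : ℕ) : ℕ := (outc S h X).1

/-- Second player's PSPE utility. -/
def o2 (S : Finset ℕ) (X : TB) (h : ℕ) : ℕ := (outc S h X).2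

theorem stmt12 (X : TB) :
    4 ≤ o1 {2, 3} X 7 ∧ 3 + o2 {2, 3} X.dual 4 = 3 := by
  exact ⟨by simp [o1, L7], by simp [o2, L4]⟩
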